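/- For a vector w ∈ ℝ³ and a symmetric traceless matrix U ∈ ℝ^{3×3}_{sym,0}, equality ½|w|² = (3/2)λ_max(w⊗w − U) holds if and only if U = w⊗w − (1/3)|w|² I₃. -/

import Mathlib

open MeasureTheory Filter
noncomputable section

/-- Euclidean dot product. -/
def dot {n : ℕ} (a b : Fin n → ℝ) : ℝ := ∑ i, a i * b i

/-- Maximal eigenvalue of a matrix (supremum of its real eigenvalues). -/
def lambdaMax {n : ℕ} (M : Matrix (Fin n) (Fin n) ℝ) : ℝ :=
  sSup {r : ℝ | ∃ v : Fin n → ℝ, v ≠ 0 ∧ M.mulVec v = r • v}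

/-- Outer (tensor) product of vectors. -/
def outer {n : ℕ} (a b : Fin n → ℝ) : Matrix (Fin n) (Fin n) ℝ :=
  Matrix.of fun i j => a i * b j

lemma eig_set_eq {n : ℕ} {M : Matrix (Fin n) (Fin n) ℝ} (hM : M.IsHermitian) :
    {r : ℝ | ∃ v : Fin n → ℝ, v ≠ 0 ∧ M.mulVec v = r • v} = Set.range hM.eigenvalues := by
  ext r
  constructor
  · rintro ⟨v, hv, hMv⟩
    set V : Matrix (Fin n) (Fin n) ℝ := (hM.eigenvectorUnitary : Matrix (Fin n) (Fin n) ℝ) with hV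
    have hVsV : V * star V = 1 := Matrix.mem_unitaryGroup_iff.mp hM.eigenvectorUnitary.2
    have hsVV : star V * V = 1 := Matrix.mem_unitaryGroup_iff'.mp hM.eigenvectorUnitary.2
    set u : Fin n → ℝ := (star V).mulVec v with hu
    have hu0 : u ≠ 0 := by
      intro h
      apply hv
      have : V.mulVec u = 0 := by rw [h, Matrix.mulVec_zero]
      rwa [hu, Matrix.mulVec_mulVec, hVsV, Matrix.one_mulVec] at this
    have hdiag : (Matrix.diagonal (RCLike.ofReal ∘ hM.eigenvalues)).mulVec u = r • u := by
      rw [← (show star V * M * V = Matrix.diagonal (RCLike.ofReal ∘ hM.eigenvalues) by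
          rw [← hM.conjStarAlgAut_star_eigenvectorUnitary, Unitary.conjStarAlgAut_apply,
            Unitary.coe_star, star_star]), hu, Matrix.mulVec_mulVec,
        mul_assoc, mul_assoc, hVsV, mul_one, ← Matrix.mulVec_mulVec, hMv,
        Matrix.mulVec_smul]
    obtain ⟨i, hi⟩ := Function.ne_iff.mp hu0
    refine ⟨i, ?_⟩
    have := congrFun hdiag i
    rw [Matrix.mulVec_diagonal] at this
    simp only [Function.comp_apply, RCLike.ofReal_real_eq_id, id_eq, Pi.smul_apply,
      smul_eq_mul] at this
    exact mul_right_cancel₀ hi this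
  · rintro ⟨i, rfl⟩
    refine ⟨⇑(hM.eigenvectorBasis i), ?_, hM.mulVec_eigenvectorBasis i⟩
    intro h
    apply hM.eigenvectorBasis.orthonormal.ne_zero i
    ext j
    exact congrFun h j

lemma sum_eig_eq_trace {n : ℕ} {M : Matrix (Fin n) (Fin n) ℝ} (hM : M.IsHermitian) :
    ∑ i, hM.eigenvalues i = M.trace := by
  have hsVV : star (hM.eigenvectorUnitary : Matrix (Fin n) (Fin n) ℝ)
      * (hM.eigenvectorUnitary : Matrix (Fin n) (Fin n) ℝ) = 1 :=
    Matrix.mem_unitaryGroup_iff'.mp hM.eigenvectorUnitary.2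
  conv_rhs => rw [hM.spectral_theorem, Unitary.conjStarAlgAut_apply]
  rw [Matrix.trace_mul_cycle, hsVV, one_mul, Matrix.trace_diagonal]
  simp

lemma eq_smul_one_of_eig_const {n : ℕ} {M : Matrix (Fin n) (Fin n) ℝ} (hM : M.IsHermitian)
    {c : ℝ} (h : ∀ i, hM.eigenvalues i = c) : M = c • (1 : Matrix (Fin n) (Fin n) ℝ) := by
  have hVsV : (hM.eigenvectorUnitary : Matrix (Fin n) (Fin n) ℝ)
      * star (hM.eigenvectorUnitary : Matrix (Fin n) (Fin n) ℝ) = 1 :=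
    Matrix.mem_unitaryGroup_iff.mp hM.eigenvectorUnitary.2
  have hd : Matrix.diagonal (RCLike.ofReal ∘ hM.eigenvalues)
      = c • (1 : Matrix (Fin n) (Fin n) ℝ) := by
    ext i j
    by_cases hij : i = j
    · simp [Matrix.diagonal_apply, hij, Matrix.one_apply, h]
    · simp [Matrix.diagonal_apply, hij, Matrix.one_apply]
  conv_lhs => rw [hM.spectral_theorem, Unitary.conjStarAlgAut_apply, hd]
  rw [Matrix.mul_smul, Matrix.smul_mul, mul_one, hVsV]

/-- Equality `½|w|² = (3/2) λ_max(w⊗w − U)` holds for a symmetric traceless `U`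
if and only if `U = w⊗w − (1/3)|w|² I₃`. -/
theorem half_normSq_eq_lambdaMax_iff
    (w : Fin 3 → ℝ) (U : Matrix (Fin 3) (Fin 3) ℝ)
    (hUsymm : U.IsSymm) (hUtrace : U.trace = 0) :
    (1 / 2) * dot w w = (3 / 2) * lambdaMax (outer w w - U) ↔
      U = outer w w - ((1 / 3) * dot w w) • (1 : Matrix (Fin 3) (Fin 3) ℝ) := by
  classical
  set t := dot w w with ht
  set M := outer w w - U with hMdef
  have hUsym : ∀ i j, U j i = U i j := fun i j => congrFun (congrFun hUsymm i) j
  have hMsym : M.IsHermitian := by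
    show M.conjTranspose = M
    ext i j
    simp only [hMdef, Matrix.conjTranspose_apply, Matrix.sub_apply, star_sub, star_trivial,
      outer, Matrix.of_apply]
    rw [hUsym j i]
    ring_nf
  have htr : M.trace = t := by
    rw [hMdef, Matrix.trace_sub, hUtrace, sub_zero]
    simp [Matrix.trace, Matrix.diag, outer, dot, ht]
  have hiff : (U = outer w w - ((1 / 3) * t) • (1 : Matrix (Fin 3) (Fin 3) ℝ)) ↔
      M = ((1 / 3) * t) • (1 : Matrix (Fin 3) (Fin 3) ℝ) := by
    constructor
    · intro h; rw [hMdef, h, sub_sub_cancel]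
    · intro h
      have : U = outer w w - M := by rw [hMdef]; exact (sub_sub_cancel _ _).symm
      rw [this, h]
  rw [hiff]
  constructor
  · intro h
    have hset := eig_set_eq hMsym
    have hbdd : BddAbove {r : ℝ | ∃ v : Fin 3 → ℝ, v ≠ 0 ∧ M.mulVec v = r • v} := by
      rw [hset]; exact (Set.finite_range _).bddAbove
    have hle : ∀ i, hMsym.eigenvalues i ≤ lambdaMax M := fun i =>
      le_csSup hbdd (hset ▸ Set.mem_range_self i)
    have hlM : lambdaMax M = (1 / 3) * t := by
      have h2 : lambdaMax M = t / 3 := by linarith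
      linarith
    have hsum : ∑ i, hMsym.eigenvalues i = t := by rw [sum_eig_eq_trace, htr]
    have heig : ∀ i, hMsym.eigenvalues i = (1 / 3) * t := by
      by_contra hc
      push_neg at hc
      obtain ⟨j, hj⟩ := hc
      have hjlt : hMsym.eigenvalues j < (1 / 3) * t :=
        lt_of_le_of_ne ((hle j).trans_eq hlM) hj
      have : ∑ i, hMsym.eigenvalues i < ∑ _i : Fin 3, (1 / 3) * t :=
        Finset.sum_lt_sum (fun i _ => (hle i).trans_eq hlM) ⟨j, Finset.mem_univ j, hjlt⟩
      simp [Finset.sum_const] at this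
      linarith [hsum]
    exact eq_smul_one_of_eig_const hMsym heig
  · intro h
    have hset : {r : ℝ | ∃ v : Fin 3 → ℝ, v ≠ 0 ∧ M.mulVec v = r • v} = {(1 / 3) * t} := by
      ext r
      simp only [Set.mem_setOf_eq, Set.mem_singleton_iff]
      constructor
      · rintro ⟨v, hv, hMv⟩
        rw [h, Matrix.smul_mulVec, Matrix.one_mulVec] at hMv
        have : (((1 : ℝ) / 3) * t - r) • v = 0 := by
          rw [sub_smul, hMv, sub_self]
        rcases smul_eq_zero.mp this with h0 | h0
        · have := sub_eq_zero.mp h0; linarith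
        · exact absurd h0 hv
      · rintro rfl
        refine ⟨fun _ => 1, ?_, ?_⟩
        · intro h0
          have := congrFun h0 0
          simp at this
        · rw [h, Matrix.smul_mulVec, Matrix.one_mulVec]
    rw [lambdaMax, hset, csSup_singleton]
    ring
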